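/- Suppose x* ∈ ℝⁿ minimizes ∑_i φ(x_i + b_i) over the set {x : ∑ x_i = R, x_i ∈ ⋃_{j=1}^m [l_{i,j}, u_{i,j}]}, where φ is convex continuous, b is nonincreasing, the intervals are disjoint and shared across i (l_{i,j} = l̃_j for j ≥ 2, u_{i,j} = ũ_j for j ≤ m−1), and for all i: u_{i,m} − l_{i,m} ≥ max_{j<m} (l̃_{j+1} − ũ_j) and u_{i,1} − l_{i,1} ≥ max_{j<m}(l̃_{j+1} − ũ_j) (case (F2,L2)). Then there exists an optimal solution x** such that for all s < t, the index of the interval containing x**_s is at most the index of the interval containing x**_t. -/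

import Mathlib

open Finset

lemma convex_pair {φ : ℝ → ℝ} (hφ : ConvexOn ℝ Set.univ φ)
    {A B p : ℝ} (h1 : A ≤ p) (h2 : p ≤ B) :
    φ p + φ (A + B - p) ≤ φ A + φ B := by
  rcases eq_or_lt_of_le (h1.trans h2) with h | h
  · have hpA : p = A := le_antisymm (by rw [h]; exact h2) h1
    rw [hpA]
    have : A + B - A = B := by ring
    rw [this]
  · set lam : ℝ := (B - p) / (B - A) with hlam
    have hBA : (0:ℝ) < B - A := by linarith
    have h0 : 0 ≤ lam := div_nonneg (by linarith) hBA.le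
    have h1' : 0 ≤ 1 - lam := by
      have : lam ≤ 1 := by
        rw [hlam, div_le_one hBA]; linarith
      linarith
    have hsum : lam + (1 - lam) = 1 := by ring
    have hp : p = lam * A + (1 - lam) * B := by
      have e : lam * (B - A) = B - p := by rw [hlam]; exact div_mul_cancel₀ _ hBA.ne'
      linear_combination e
    have hq : A + B - p = (1 - lam) * A + lam * B := by
      have e : lam * (B - A) = B - p := by rw [hlam]; exact div_mul_cancel₀ _ hBA.ne'
      linear_combination -e
    have c1 := hφ.2 (Set.mem_univ A) (Set.mem_univ B) h0 h1' hsum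
    have c2 := hφ.2 (Set.mem_univ A) (Set.mem_univ B) h1' h0 (by ring)
    simp only [smul_eq_mul] at c1 c2
    rw [← hp] at c1
    rw [← hq] at c2
    linarith

lemma sum_two_update {n : ℕ} (F : Fin n → ℝ → ℝ) (f : Fin n → ℝ) {s t : Fin n}
    (hst : s ≠ t) (a c : ℝ) :
    ∑ i, F i (Function.update (Function.update f t c) s a i) + (F s (f s) + F t (f t))
      = ∑ i, F i (f i) + (F s a + F t c) := by
  classical
  have key : ∀ g : Fin n → ℝ,
      ∑ i, F i (g i) = F s (g s) + (F t (g t) + ∑ i ∈ (univ.erase s).erase t, F i (g i)) := by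
    intro g
    rw [← Finset.add_sum_erase _ _ (mem_univ s)]
    congr 1
    rw [← Finset.add_sum_erase _ _ (Finset.mem_erase.mpr ⟨hst.symm, mem_univ t⟩)]
  have hs' : Function.update (Function.update f t c) s a s = a := Function.update_self _ _ _
  have ht' : Function.update (Function.update f t c) s a t = c := by
    rw [Function.update_of_ne hst.symm, Function.update_self]
  have htail : ∑ i ∈ (univ.erase s).erase t, F i (Function.update (Function.update f t c) s a i)
      = ∑ i ∈ (univ.erase s).erase t, F i (f i) := by
    apply Finset.sum_congr rfl
    intro i hi
    rw [Finset.mem_erase, Finset.mem_erase] at hi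
    rw [Function.update_of_ne hi.2.1, Function.update_of_ne hi.1]
  rw [key, key f, hs', ht', htail]
  ring

theorem stmt_19 (n m : ℕ) (hm : 0 < m)
    (φ : ℝ → ℝ) (hφ : ConvexOn ℝ Set.univ φ) (hφc : Continuous φ)
    (b : Fin n → ℝ) (hb : Antitone b) (R : ℝ)
    (l u : Fin n → Fin m → ℝ) (lt ut : Fin m → ℝ)
    (hlu : ∀ i j, l i j ≤ u i j)
    (hdisj : ∀ (i : Fin n) (j j' : Fin m), j < j' → u i j < l i j')
    (hsharedl : ∀ (i : Fin n) (j : Fin m), j ≠ (⟨0, hm⟩ : Fin m) → l i j = lt j)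
    (hsharedu : ∀ (i : Fin n) (j : Fin m), j ≠ (⟨m - 1, by omega⟩ : Fin m) →
      u i j = ut j)
    -- (F2): the first interval of each variable is at least as long as any gap
    (hF2 : ∀ (i : Fin n) (j : ℕ) (hj : j + 1 < m),
      lt ⟨j + 1, hj⟩ - ut ⟨j, by omega⟩ ≤
        u i (⟨0, hm⟩ : Fin m) - l i (⟨0, hm⟩ : Fin m))
    -- (L2): the last interval of each variable is at least as long as any gap
    (hL2 : ∀ (i : Fin n) (j : ℕ) (hj : j + 1 < m),
      lt ⟨j + 1, hj⟩ - ut ⟨j, by omega⟩ ≤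
        u i (⟨m - 1, by omega⟩ : Fin m) - l i (⟨m - 1, by omega⟩ : Fin m))
    (xstar : Fin n → ℝ)
    (hfeas : ∑ i, xstar i = R ∧ ∀ i, ∃ j : Fin m, l i j ≤ xstar i ∧ xstar i ≤ u i j)
    (hopt : ∀ x : Fin n → ℝ,
      (∑ i, x i = R ∧ ∀ i, ∃ j : Fin m, l i j ≤ x i ∧ x i ≤ u i j) →
      ∑ i, φ (xstar i + b i) ≤ ∑ i, φ (x i + b i)) :
    ∃ xss : Fin n → ℝ,
      (∑ i, xss i = R ∧ ∀ i, ∃ j : Fin m, l i j ≤ xss i ∧ xss i ≤ u i j) ∧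
      (∀ x : Fin n → ℝ,
        (∑ i, x i = R ∧ ∀ i, ∃ j : Fin m, l i j ≤ x i ∧ x i ≤ u i j) →
        ∑ i, φ (xss i + b i) ≤ ∑ i, φ (x i + b i)) ∧
      (∀ s t : Fin n, s < t → ∀ js jt : Fin m,
        (l s js ≤ xss s ∧ xss s ≤ u s js) →
        (l t jt ≤ xss t ∧ xss t ≤ u t jt) → js ≤ jt) := by
  classical
  set K : Set (Fin n → ℝ) :=
    {x | (∑ i, x i = R ∧ ∀ i, ∃ j : Fin m, l i j ≤ x i ∧ x i ≤ u i j) ∧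
      ∑ i, φ (x i + b i) ≤ ∑ i, φ (xstar i + b i)} with hK
  have hxstarK : xstar ∈ K := ⟨hfeas, le_refl _⟩
  have hKclosed : IsClosed K := by
    have h1 : IsClosed {x : Fin n → ℝ | ∑ i, x i = R} :=
      isClosed_eq (continuous_finset_sum _ (fun i _ => continuous_apply i)) continuous_const
    have h2 : IsClosed {x : Fin n → ℝ | ∀ i, ∃ j : Fin m, l i j ≤ x i ∧ x i ≤ u i j} := by
      have heq : {x : Fin n → ℝ | ∀ i, ∃ j : Fin m, l i j ≤ x i ∧ x i ≤ u i j}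
          = ⋂ i, (fun x : Fin n → ℝ => x i) ⁻¹' (⋃ j : Fin m, Set.Icc (l i j) (u i j)) := by
        ext x
        simp [Set.mem_iInter, Set.mem_iUnion, Set.mem_Icc]
      rw [heq]
      exact isClosed_iInter fun i =>
        (isClosed_iUnion_of_finite fun j => isClosed_Icc).preimage (continuous_apply i)
    have h3 : IsClosed {x : Fin n → ℝ | ∑ i, φ (x i + b i) ≤ ∑ i, φ (xstar i + b i)} :=
      isClosed_le (continuous_finset_sum _
        (fun i _ => hφc.comp ((continuous_apply i).add continuous_const))) continuous_const
    have heq : K = ({x : Fin n → ℝ | ∑ i, x i = R} ∩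
        {x : Fin n → ℝ | ∀ i, ∃ j : Fin m, l i j ≤ x i ∧ x i ≤ u i j}) ∩
        {x : Fin n → ℝ | ∑ i, φ (x i + b i) ≤ ∑ i, φ (xstar i + b i)} := by
      ext x
      simp only [hK, Set.mem_setOf_eq, Set.mem_inter_iff]
    rw [heq]
    exact (h1.inter h2).inter h3
  have hKcompact : IsCompact K := by
    have hsub : K ⊆ Set.Icc (fun i => l i ⟨0, hm⟩) (fun i => u i ⟨m - 1, by omega⟩) := by
      intro x hx
      constructor
      · intro i
        obtain ⟨j, hj1, hj2⟩ := hx.1.2 i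
        by_cases hj0 : j = (⟨0, hm⟩ : Fin m)
        · rw [← hj0]; exact hj1
        · have h0j : (⟨0, hm⟩ : Fin m) < j := by
            rw [Fin.lt_def]
            have : (j : ℕ) ≠ 0 := fun hc => hj0 (Fin.ext hc)
            simpa using Nat.pos_of_ne_zero this
          have := hdisj i _ j h0j
          have := hlu i (⟨0, hm⟩ : Fin m)
          linarith
      · intro i
        obtain ⟨j, hj1, hj2⟩ := hx.1.2 i
        by_cases hjl : j = (⟨m - 1, by omega⟩ : Fin m)
        · rw [← hjl]; exact hj2
        · have hjlt : j < (⟨m - 1, by omega⟩ : Fin m) := by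
            rw [Fin.lt_def]
            have h1 : (j : ℕ) < m := j.isLt
            have h2 : (j : ℕ) ≠ m - 1 := fun hc => hjl (Fin.ext hc)
            simp only
            omega
          have := hdisj i j _ hjlt
          have := hlu i (⟨m - 1, by omega⟩ : Fin m)
          linarith
    exact IsCompact.of_isClosed_subset isCompact_Icc hKclosed hsub
  set G : (Fin n → ℝ) → ℝ := fun x => ∑ i : Fin n, ((i : ℕ) : ℝ) * x i with hG
  have hGcont : ContinuousOn G K := by
    apply Continuous.continuousOn
    exact continuous_finset_sum _ (fun i _ => (continuous_const.mul (continuous_apply i)))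
  obtain ⟨xss, hmem, hmax⟩ := hKcompact.exists_isMaxOn ⟨xstar, hxstarK⟩ hGcont
  refine ⟨xss, hmem.1, ?_, ?_⟩
  · intro x hx
    exact le_trans hmem.2 (hopt x hx)
  · intro s t hst js jt hs ht
    by_contra hj
    have hlt : jt < js := lt_of_not_ge hj
    set xs := xss s with hxs
    set xt := xss t with hxt
    -- move lemma
    have hmove : ∃ y z : ℝ, (∃ j, l t j ≤ y ∧ y ≤ u t j) ∧ (∃ j, l s j ≤ z ∧ z ≤ u s j) ∧
        y + z = xs + xt ∧ xt < y ∧ y ≤ xs := by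
      have hltv : (jt : ℕ) < (js : ℕ) := hlt
      have hjsm : (js : ℕ) < m := js.isLt
      have hm2 : 2 ≤ m := by omega
      set j0 : Fin m := ⟨0, hm⟩ with hj0def
      set jlast : Fin m := ⟨m - 1, by omega⟩ with hjlastdef
      have hjs0 : js ≠ j0 := by
        intro h
        have := congrArg Fin.val h
        simp [hj0def] at this
        omega
      have hjtl : jt ≠ jlast := by
        intro h
        have := congrArg Fin.val h
        simp [hjlastdef] at this
        omega
      have h0l : j0 ≠ jlast := by
        intro h
        have := congrArg Fin.val h
        simp [hj0def, hjlastdef] at this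
        omega
      have hlsjs : l s js = lt js := hsharedl s js hjs0
      have hltjs : l t js = lt js := hsharedl t js hjs0
      have hutjt : u t jt = ut jt := hsharedu t jt hjtl
      have husjt : u s jt = ut jt := hsharedu s jt hjtl
      have hxtxs : xt < xs := by
        have hd := hdisj t jt js hlt
        have h1 := ht.2
        have h2 := hs.1
        rw [hltjs] at hd
        rw [hlsjs] at h2
        linarith
      by_cases h1 : xt = u t jt
      · -- t is stuck at the top of its interval
        by_cases h2 : xs ≤ u t js
        · -- full swap
          refine ⟨xs, xt, ⟨js, ?_, h2⟩, ⟨jt, ?_, ?_⟩, by ring, hxtxs, le_refl _⟩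
          · rw [hltjs, ← hlsjs]; exact hs.1
          · have := hlu s jt
            rw [husjt, ← hutjt, ← h1] at this
            linarith [this]
          · rw [husjt, ← hutjt, ← h1]
        · -- xs above u t js : js must be the last interval; jump t over the gap
          push_neg at h2
          have hjsl : js = jlast := by
            by_contra hne
            have e1 := hsharedu t js hne
            have e2 := hsharedu s js hne
            have := hs.2
            linarith
          have hjt1 : (jt : ℕ) + 1 < m := by omega
          set jn : Fin m := ⟨(jt : ℕ) + 1, hjt1⟩ with hjndef
          have hjtltjn : jt < jn := by
            rw [Fin.lt_def]; simp [hjndef]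
          have hjn0 : jn ≠ j0 := by
            intro h
            have := congrArg Fin.val h
            simp [hjndef, hj0def] at this
          have hltjn : l t jn = lt jn := hsharedl t jn hjn0
          have hgpos : u t jt < lt jn := by
            have := hdisj t jt jn hjtltjn
            rw [hltjn] at this
            exact this
          have hL2' := hL2 t (jt : ℕ) hjt1
          have hL2'' : lt jn - ut jt ≤ u t jlast - l t jlast := by
            exact hL2'
          have hltlast : l t jlast = lt jlast := hsharedl t jlast (by
            intro h
            have := congrArg Fin.val h
            simp [hjlastdef, hj0def] at this
            omega)
          set g : ℝ := lt jn - ut jt with hgdef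
          refine ⟨lt jn, xs - g, ⟨jn, le_of_eq hltjn, ?_⟩, ⟨js, ?_, ?_⟩, ?_, ?_, ?_⟩
          · rw [← hltjn]; exact hlu t jn
          · -- l s js ≤ xs - g
            have hlast2 : lt jlast = lt js := by rw [hjsl]
            have hulast : u t jlast = u t js := by rw [hjsl]
            rw [hlsjs]
            rw [hltlast, hlast2, hulast] at hL2''
            linarith
          · -- xs - g ≤ u s js
            have : 0 < g := by rw [hgdef, ← hutjt]; linarith
            linarith [hs.2]
          · rw [hgdef, ← hutjt, ← h1]; ring
          · rw [h1, hutjt]; linarith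
          · -- lt jn ≤ xs
            rcases eq_or_ne jn js with he | hne
            · rw [he, ← hlsjs]; exact hs.1
            · have hjnjs : jn < js := by
                rw [Fin.lt_def]
                have hv : (jn : ℕ) ≠ (js : ℕ) := fun hc => hne (Fin.ext hc)
                have hv2 : (jn : ℕ) = (jt : ℕ) + 1 := rfl
                omega
              have := hdisj t jn js hjnjs
              have h4 := hlu t jn
              rw [hltjn] at h4
              rw [hltjs] at this
              rw [hlsjs] at hs
              linarith [hs.1]
      · -- t has room to move up inside its interval
        have h1' : xt < u t jt := lt_of_le_of_ne ht.2 h1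
        by_cases h2 : l s js < xs
        · -- both have interior room: slide
          set ε : ℝ := min (min (u t jt - xt) (xs - l s js)) (xs - xt) with hεdef
          have hε : 0 < ε :=
            lt_min (lt_min (by linarith) (by linarith)) (by linarith)
          have hε1 : ε ≤ u t jt - xt := (min_le_left _ _).trans (min_le_left _ _)
          have hε2 : ε ≤ xs - l s js := (min_le_left _ _).trans (min_le_right _ _)
          have hε3 : ε ≤ xs - xt := min_le_right _ _
          exact ⟨xt + ε, xs - ε, ⟨jt, by linarith [ht.1], by linarith⟩,
            ⟨js, by linarith, by linarith [hs.2]⟩, by ring, by linarith, by linarith⟩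
        · -- s is stuck at the bottom of its interval
          have h2' : xs = l s js := le_antisymm (not_lt.mp h2) hs.1
          by_cases h3 : l s jt ≤ xt
          · -- full swap
            refine ⟨xs, xt, ⟨js, ?_, ?_⟩, ⟨jt, h3, ?_⟩, by ring, hxtxs, le_refl _⟩
            · rw [hltjs, ← hlsjs]; exact hs.1
            · rw [h2', hlsjs, ← hltjs]; exact hlu t js
            · rw [husjt, ← hutjt]; exact ht.2
          · -- xt below l s jt : jt must be the first interval; jump s over the gap
            push_neg at h3
            have hjt0 : jt = j0 := by
              by_contra hne
              have e1 := hsharedl s jt hne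
              have e2 := hsharedl t jt hne
              have := ht.1
              linarith
            have hjs1 : 1 ≤ (js : ℕ) := by omega
            have hjp1 : (js : ℕ) - 1 + 1 < m := by omega
            set jp : Fin m := ⟨(js : ℕ) - 1, by omega⟩ with hjpdef
            have hjseq : (⟨(js : ℕ) - 1 + 1, hjp1⟩ : Fin m) = js := by
              apply Fin.ext
              simp only [Fin.val_mk]
              omega
            have hF2' := hF2 s ((js : ℕ) - 1) hjp1
            have hF2'' : lt js - ut jp ≤ u s j0 - l s j0 := by
              rw [← hjseq]
              exact hF2'
            have hjplast : jp ≠ jlast := by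
              intro h
              have := congrArg Fin.val h
              simp [hjpdef, hjlastdef] at this
              omega
            have huspjp : u s jp = ut jp := hsharedu s jp hjplast
            have hjpjs : jp < js := by
              rw [Fin.lt_def]
              simp only [hjpdef, Fin.val_mk]
              omega
            have hgap : u s jp < l s js := hdisj s jp js hjpjs
            set g' : ℝ := lt js - ut jp with hg'def
            have hg'pos : 0 < g' := by
              rw [hg'def, ← huspjp, ← hlsjs]
              linarith
            have hut0 : u t j0 = ut j0 := hsharedu t j0 h0l
            have hus0 : u s j0 = ut j0 := hsharedu s j0 h0l
            have hxtls0 : xt < l s j0 := by rw [← hjt0]; exact h3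
            have hzxt : xt < ut jp := by
              rcases eq_or_ne jp j0 with he | hne
              · rw [he, ← hus0]
                have := hlu s j0
                linarith
              · have h0jp : j0 < jp := by
                  rw [Fin.lt_def]
                  have hv : (jp : ℕ) ≠ (j0 : ℕ) := fun hc => hne (Fin.ext hc)
                  have hv2 : (j0 : ℕ) = 0 := rfl
                  omega
                have h6 := hdisj s j0 jp h0jp
                have h5 := hlu s j0
                have h7 := hlu s jp
                rw [huspjp] at h7
                linarith
            refine ⟨xt + g', ut jp, ⟨jt, by linarith [ht.1], ?_⟩,
              ⟨jp, ?_, le_of_eq huspjp.symm⟩, ?_, by linarith, ?_⟩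
            · -- xt + g' ≤ u t jt
              rw [hjt0, hut0, ← hus0]
              linarith
            · rw [← huspjp]; exact hlu s jp
            · -- sum
              rw [h2', hlsjs, hg'def]; ring
            · -- xt + g' ≤ xs
              have : xt + g' = xs + xt - ut jp := by
                rw [hg'def, h2', hlsjs]; ring
              linarith
    obtain ⟨y, z, hyT, hzS, hsum, hylb, hyub⟩ := hmove
    have hne : s ≠ t := ne_of_lt hst
    set x' := Function.update (Function.update xss t y) s z with hx'
    have hzlb : xt ≤ z := by linarith
    have hzub : z < xs := by linarith
    have hx'K : x' ∈ K := by
      refine ⟨⟨?_, ?_⟩, ?_⟩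
      · have := sum_two_update (fun _ v => v) xss hne z y
        have hsumR : ∑ i, xss i = R := hmem.1.1
        linarith
      · intro i
        by_cases his : i = s
        · subst his
          have : x' i = z := Function.update_self _ _ _
          rw [this]; exact hzS
        · by_cases hit : i = t
          · subst hit
            have : x' i = y := by
              rw [hx', Function.update_of_ne (by exact fun hh => his hh), Function.update_self]
            rw [this]; exact hyT
          · have : x' i = xss i := by
              rw [hx', Function.update_of_ne his, Function.update_of_ne hit]
            rw [this]; exact hmem.1.2 i
      · have hkey := sum_two_update (fun i v => φ (v + b i)) xss hne z y
        have hbst : b t ≤ b s := hb hst.le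
        have hpair : φ (z + b s) + φ (y + b t) ≤ φ (xt + b t) + φ (xs + b s) := by
          have h1 : xt + b t ≤ z + b s := by linarith
          have h2 : z + b s ≤ xs + b s := by linarith
          have := convex_pair hφ h1 h2
          have heq : (xt + b t) + (xs + b s) - (z + b s) = y + b t := by linarith
          rw [heq] at this
          exact this
        have := hmem.2
        linarith
    have hcontra := hmax hx'K
    have hGx' := sum_two_update (fun i v => ((i:ℕ):ℝ) * v) xss hne z y
    have hstR : ((s:ℕ):ℝ) < ((t:ℕ):ℝ) := by
      exact_mod_cast hst
    have : G x' > G xss := by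
      have hGxss : G xss = ∑ i : Fin n, ((i:ℕ):ℝ) * xss i := rfl
      have hGx'2 : G x' = ∑ i : Fin n, ((i:ℕ):ℝ) * x' i := rfl
      rw [hGxss, hGx'2]
      nlinarith [hGx', hylb, hstR]
    have : ¬ (G x' ≤ G xss) := not_le.mpr this
    exact this hcontra
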